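/- Let α = (α_i)_{i≥0} and β = (β_i)_{i≥0} be two sequences of complex numbers with α_0 = β_0. Then for every positive integer n, the Töplitz matrix satisfies T_{α,β}(n) = L(n)^{-1} · P_{α̌,β̌}(n) · U(n)^{-1}, equivalently P_{α̌,β̌}(n) = L(n) · T_{α,β}(n) · U(n), where L(n) is the n×n lower triangular matrix with entries L_{i,j} = binomial(i,j) for i ≥ j and 0 otherwise, U(n) = L(n)^t, and α̌, β̌ are the binomial transforms of α, β. -/

import Mathlib

open Matrix

/-- Entry `P_{i,j}` of the generalized Pascal triangle associated to sequences `α`, `β`: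
`P_{i,0} = α i`, `P_{0,j} = β j`, and `P_{i,j} = P_{i-1,j} + P_{i,j-1}` for `i, j ≥ 1`. -/
def pascalEntry {R : Type*} [CommRing R] (α β : ℕ → R) : ℕ → ℕ → R
  | i, 0 => α i
  | 0, j + 1 => β (j + 1)
  | i + 1, j + 1 => pascalEntry α β i (j + 1) + pascalEntry α β (i + 1) j

/-- The generalized Pascal triangle `P_{α,β}(n)`. -/
def genPascal {R : Type*} [CommRing R] (α β : ℕ → R) (n : ℕ) :
    Matrix (Fin n) (Fin n) R :=
  Matrix.of fun i j => pascalEntry α β (i : ℕ) (j : ℕ)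

/-- The Töplitz matrix `T_{α,β}(n)`: `t_{i,j} = α_{i-j}` if `i ≥ j`, else `β_{j-i}`. -/
def toeplitz {R : Type*} [CommRing R] (α β : ℕ → R) (n : ℕ) :
    Matrix (Fin n) (Fin n) R :=
  Matrix.of fun i j => if (j : ℕ) ≤ (i : ℕ) then α ((i : ℕ) - (j : ℕ)) else β ((j : ℕ) - (i : ℕ))

/-- The unipotent lower triangular matrix `L(n)` with `L_{i,j} = C(i,j)` for `i ≥ j`. -/
def lowerL (R : Type*) [CommRing R] (n : ℕ) : Matrix (Fin n) (Fin n) R :=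
  Matrix.of fun i j => if (j : ℕ) ≤ (i : ℕ) then ((i : ℕ).choose (j : ℕ) : R) else 0

/-- The binomial inverse transform `α̂_i = ∑_{k=0}^{i} (-1)^{i+k} C(i,k) α_k`. -/
def hatSeq {R : Type*} [CommRing R] (α : ℕ → R) (i : ℕ) : R :=
  ∑ k ∈ Finset.range (i + 1), (-1 : R) ^ (i + k) * (i.choose k : R) * α k

/-- The binomial transform `α̌_i = ∑_{k=0}^{i} C(i,k) α_k`. -/
def checkSeq {R : Type*} [CommRing R] (α : ℕ → R) (i : ℕ) : R :=
  ∑ k ∈ Finset.range (i + 1), (i.choose k : R) * α k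


noncomputable def tEnt (α β : ℕ → ℂ) (k l : ℕ) : ℂ := if l ≤ k then α (k - l) else β (l - k)

noncomputable def Gfun (α β : ℕ → ℂ) (j k : ℕ) : ℂ :=
  ∑ l ∈ Finset.range (j + 1), (j.choose l : ℂ) * tEnt α β k l

noncomputable def Ffun (α β : ℕ → ℂ) (i j : ℕ) : ℂ :=
  ∑ k ∈ Finset.range (i + 1), (i.choose k : ℂ) * Gfun α β j k

lemma binom_shift (i : ℕ) (g : ℕ → ℂ) :
    ∑ k ∈ Finset.range (i + 2), ((i + 1).choose k : ℂ) * g k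
      = ∑ k ∈ Finset.range (i + 1), (i.choose k : ℂ) * g k
        + ∑ k ∈ Finset.range (i + 1), (i.choose k : ℂ) * g (k + 1) := by
  rw [Finset.sum_range_succ' (fun k => ((i + 1).choose k : ℂ) * g k) (i + 1)]
  have h1 : ∀ k, (((i+1).choose (k+1) : ℕ) : ℂ) = (i.choose k : ℂ) + (i.choose (k+1) : ℂ) := by
    intro k; rw [Nat.choose_succ_succ]; push_cast; ring
  simp only [h1, add_mul]
  rw [Finset.sum_add_distrib]
  have h2 : ∑ k ∈ Finset.range (i + 1), (i.choose (k+1) : ℂ) * g (k + 1)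
      = ∑ k ∈ Finset.range i, (i.choose (k+1) : ℂ) * g (k + 1) := by
    rw [Finset.sum_range_succ, Nat.choose_succ_self]; simp
  have h3 : ∑ k ∈ Finset.range (i + 1), (i.choose k : ℂ) * g k
      = (∑ k ∈ Finset.range i, (i.choose (k+1) : ℂ) * g (k + 1)) + (i.choose 0 : ℂ) * g 0 := by
    rw [Finset.sum_range_succ' (fun k => (i.choose k : ℂ) * g k) i]
  rw [h2, h3]
  simp [Nat.choose_zero_right]
  ring

lemma tEnt_shift (α β : ℕ → ℂ) (k l : ℕ) : tEnt α β (k+1) (l+1) = tEnt α β k l := by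
  simp [tEnt, Nat.succ_sub_succ]

lemma Gfun_succ (α β : ℕ → ℂ) (j k : ℕ) :
    Gfun α β (j+1) (k+1) = Gfun α β j (k+1) + Gfun α β j k := by
  unfold Gfun
  rw [show j + 1 + 1 = j + 2 from rfl, binom_shift j (fun l => tEnt α β (k+1) l)]
  simp only [tEnt_shift]

lemma Ffun_rec (α β : ℕ → ℂ) (i j : ℕ) :
    Ffun α β (i+1) (j+1) = Ffun α β i (j+1) + Ffun α β (i+1) j := by
  unfold Ffun
  rw [show i + 1 + 1 = i + 2 from rfl, binom_shift i (fun k => Gfun α β (j+1) k),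
      binom_shift i (fun k => Gfun α β j k)]
  simp only [Gfun_succ, mul_add]
  rw [Finset.sum_add_distrib]
  ring

lemma pascal_eq_Ffun (α β : ℕ → ℂ) (h : α 0 = β 0) :
    ∀ i j, pascalEntry (checkSeq α) (checkSeq β) i j = Ffun α β i j
  | i, 0 => by
      simp only [pascalEntry, Ffun, Gfun, checkSeq]
      congr 1; funext k
      simp [tEnt]
  | 0, j + 1 => by
      have h0 : Ffun α β 0 (j+1) = Gfun α β (j+1) 0 := by simp [Ffun]
      rw [pascalEntry, h0]
      unfold Gfun checkSeq
      apply Finset.sum_congr rfl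
      intro l _
      congr 1
      cases l with
      | zero => simp [tEnt, h]
      | succ m => simp [tEnt]
  | i + 1, j + 1 => by
      rw [pascalEntry, pascal_eq_Ffun α β h i (j+1), pascal_eq_Ffun α β h (i+1) j, Ffun_rec]

lemma fin_L_sum {n : ℕ} (i : Fin n) (f : ℕ → ℂ) :
    ∑ k : Fin n, (if (k : ℕ) ≤ (i : ℕ) then (((i : ℕ)).choose k : ℂ) else 0) * f k
      = ∑ k ∈ Finset.range ((i : ℕ) + 1), (((i : ℕ)).choose k : ℂ) * f k := by
  rw [Fin.sum_univ_eq_sum_range (fun k => (if k ≤ (i : ℕ) then (((i : ℕ)).choose k : ℂ) else 0) * f k) n]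
  rw [← Finset.sum_subset (Finset.range_subset_range.mpr i.2)]
  · apply Finset.sum_congr rfl
    intro k hk
    rw [Finset.mem_range, Nat.lt_succ_iff] at hk
    simp [hk]
  · intro k _ hk
    rw [Finset.mem_range, Nat.lt_succ_iff] at hk
    simp [hk]


/-- `T_{α,β}(n) = L(n)⁻¹ · P_{α̌,β̌}(n) · U(n)⁻¹`, equivalently
`P_{α̌,β̌}(n) = L(n) · T_{α,β}(n) · U(n)`, where `U(n) = L(n)ᵀ`. -/
theorem toeplitz_factorization (α β : ℕ → ℂ) (h : α 0 = β 0) (n : ℕ) (hn : 0 < n) :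
    toeplitz α β n =
      (lowerL ℂ n)⁻¹ * genPascal (checkSeq α) (checkSeq β) n * ((lowerL ℂ n)ᵀ)⁻¹ ∧
    genPascal (checkSeq α) (checkSeq β) n = lowerL ℂ n * toeplitz α β n * (lowerL ℂ n)ᵀ := by
  have key : genPascal (checkSeq α) (checkSeq β) n = lowerL ℂ n * toeplitz α β n * (lowerL ℂ n)ᵀ := by
    ext i j
    have hTL : (toeplitz α β n * (lowerL ℂ n)ᵀ) = Matrix.of fun (k j : Fin n) => Gfun α β (j : ℕ) (k : ℕ) := by
      ext k j
      rw [Matrix.mul_apply]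
      simp only [toeplitz, lowerL, transpose_apply, of_apply]
      have := fin_L_sum j (fun l => tEnt α β (k : ℕ) l)
      rw [show (∑ l : Fin n, (if (l : ℕ) ≤ (k : ℕ) then α ((k:ℕ) - (l:ℕ)) else β ((l:ℕ) - (k:ℕ))) * (if (l : ℕ) ≤ (j : ℕ) then (((j : ℕ)).choose l : ℂ) else 0))
          = ∑ l : Fin n, (if (l : ℕ) ≤ (j : ℕ) then (((j : ℕ)).choose l : ℂ) else 0) * tEnt α β (k : ℕ) (l : ℕ) from by
        apply Finset.sum_congr rfl; intro l _; rw [mul_comm]; rfl]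
      rw [this]
      rfl
    rw [mul_assoc, hTL]
    rw [Matrix.mul_apply]
    simp only [genPascal, lowerL, of_apply]
    rw [pascal_eq_Ffun α β h]
    rw [show (∑ k : Fin n, (if (k : ℕ) ≤ (i : ℕ) then (((i : ℕ)).choose k : ℂ) else 0) * Gfun α β (j : ℕ) (k : ℕ))
        = Ffun α β (i : ℕ) (j : ℕ) from by
      rw [fin_L_sum i (fun k => Gfun α β (j : ℕ) k)]; rfl]
  refine ⟨?_, key⟩
  have hdet : (lowerL ℂ n).det = 1 := by
    rw [Matrix.det_of_lowerTriangular (lowerL ℂ n)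
      (by intro i j hij
          have hij' : (i : ℕ) < (j : ℕ) := hij
          simp only [lowerL, Matrix.of_apply, if_neg (Nat.not_le.mpr hij')])]
    simp [lowerL]
  have hu : IsUnit (lowerL ℂ n).det := by rw [hdet]; exact isUnit_one
  have hut : IsUnit ((lowerL ℂ n)ᵀ).det := by rwa [Matrix.det_transpose]
  rw [key]
  rw [Matrix.mul_assoc (lowerL ℂ n)]
  rw [Matrix.nonsing_inv_mul_cancel_left _ _ hu]
  rw [Matrix.mul_nonsing_inv_cancel_right _ _ hut]
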